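/- Let k be a field, G a group, and V a k-vector space with a representation ρ : G → GL(V) that is irreducible, i.e. V ≠ 0 and the only ρ-invariant k-subspaces of V are 0 and V. Let N : V → V be a nilpotent k-linear endomorphism and suppose there exists a function c : G → kˣ of invertible scalars such that ρ(g) ∘ N = c(g) • (N ∘ ρ(g)) for all g ∈ G. Then N = 0. -/

import Mathlib

/-- If `ρ : G → GL(V)` is an irreducible representation over a field `k`, `N : V → V` is a
nilpotent `k`-linear endomorphism, and there is a function `c : G → kˣ` with
`ρ(g) ∘ N = c(g) • (N ∘ ρ(g))` for all `g`, then `N = 0`. -/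
theorem nilpotent_scaled_commuting_with_irreducible_eq_zero
    {k : Type*} [Field k] {V : Type*} [AddCommGroup V] [Module k V]
    {G : Type*} [Group G] (ρ : G →* (V →ₗ[k] V)ˣ)
    (hnt : Nontrivial V)
    (hirr : ∀ U : Submodule k V, (∀ g : G, U.map (ρ g : V →ₗ[k] V) ≤ U) → U = ⊥ ∨ U = ⊤)
    (N : V →ₗ[k] V) (hN : IsNilpotent N)
    (c : G → kˣ)
    (hc : ∀ g : G, (ρ g : V →ₗ[k] V) ∘ₗ N = (c g : k) • (N ∘ₗ (ρ g : V →ₗ[k] V))) :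
    N = 0 := by
  have hker : ∀ g : G, (LinearMap.ker N).map (ρ g : V →ₗ[k] V) ≤ LinearMap.ker N := by
    intro g x hx
    rcases hx with ⟨y, hy, rfl⟩
    have hy' : N y = 0 := hy
    have := congrArg (fun f : V →ₗ[k] V => f y) (hc g)
    simp only [LinearMap.comp_apply, LinearMap.smul_apply, hy', map_zero] at this
    have : N ((ρ g : V →ₗ[k] V) y) = 0 := by
      have h0 : (0 : V) = (c g : k) • N ((ρ g : V →ₗ[k] V) y) := this
      have := h0.symm
      exact (smul_eq_zero_iff_right (Units.ne_zero (c g))).mp this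
    exact this
  rcases hirr (LinearMap.ker N) hker with h | h
  · -- ker N = ⊥ : N injective, contradiction with nilpotency
    exfalso
    obtain ⟨m, hm⟩ := hN
    have hinj : Function.Injective N := LinearMap.ker_eq_bot.mp h
    have hinjm : ∀ n : ℕ, Function.Injective (N ^ n) := by
      intro n
      induction n with
      | zero => simpa [pow_zero, Module.End.coe_one] using Function.injective_id
      | succ n ih =>
        rw [pow_succ']
        exact (LinearMap.coe_comp N (N ^ n) ▸ hinj.comp ih : _)
    obtain ⟨x, y, hxy⟩ := hnt
    apply hxy
    apply hinjm m
    simp [hm]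
  · exact LinearMap.ker_eq_top.mp h
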